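/- arXiv:1604.04162 — 2 statements merged into one kernel-verified Lean document; each statement's English description precedes it below -/
import Mathlib

section
/- Let G be a group with a commensurated subgroup Λ. Then for every g, h ∈ G there exists a finite index subgroup Λ' of Λ such that [[g, λ], h] ∈ Λ for every λ ∈ Λ'. -/
def conjS {G : Type*} [Group G] (g : G) (H : Subgroup G) : Subgroup G :=
  H.map (MulAut.conj g).toMonoidHom

/-- `Λ` is commensurated: `gΛg⁻¹ ∩ Λ` has finite index in `Λ` for all `g`. -/
def Commensurated {G : Type*} [Group G] (H : Subgroup G) : Prop :=
  ∀ g : G, (conjS g H ⊓ H).relIndex H ≠ 0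

lemma mem_conjS {G : Type*} [Group G] {g x : G} {H : Subgroup G}
    (hx : x ∈ conjS g H) : g⁻¹ * x * g ∈ H := by
  obtain ⟨y, hy, rfl⟩ := hx
  have : g⁻¹ * ((MulAut.conj g).toMonoidHom y) * g = y := by simp [MulAut.conj_apply]; group
  rwa [this]

open scoped commutatorElement

theorem stmt_7 {G : Type*} [Group G] (Λ : Subgroup G) (hΛ : Commensurated Λ)
    (g h : G) :
    ∃ Λ' : Subgroup G, Λ' ≤ Λ ∧ Λ'.relIndex Λ ≠ 0 ∧
      ∀ l ∈ Λ', ⁅⁅g, l⁆, h⁆ ∈ Λ := by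
  refine ⟨(conjS g⁻¹ Λ ⊓ Λ) ⊓ ((conjS h⁻¹ Λ ⊓ Λ) ⊓ (conjS (h*g)⁻¹ Λ ⊓ Λ)), ?_, ?_, ?_⟩
  · exact le_trans inf_le_left inf_le_right
  · exact Subgroup.relIndex_inf_ne_zero (hΛ g⁻¹)
      (Subgroup.relIndex_inf_ne_zero (hΛ h⁻¹) (hΛ (h*g)⁻¹))
  · rintro l ⟨⟨h1, hl⟩, ⟨h2, -⟩, ⟨h3, -⟩⟩
    have a1 : g * l * g⁻¹ ∈ Λ := by simpa using mem_conjS h1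
    have a2 : h * l * h⁻¹ ∈ Λ := by simpa using mem_conjS h2
    have a3 : (h*g) * l * (h*g)⁻¹ ∈ Λ := by simpa using mem_conjS h3
    have key : ⁅⁅g, l⁆, h⁆ =
        (g * l * g⁻¹) * l⁻¹ * (h * l * h⁻¹) * ((h*g) * l * (h*g)⁻¹)⁻¹ := by
      simp only [commutatorElement_def]
      group
    rw [key]
    exact mul_mem (mul_mem (mul_mem a1 (inv_mem hl)) a2) (inv_mem a3)
end

section
/- Let G be a simple group and Λ a commensurated subgroup of G. If Λ contains a subgroup L that has no proper finite index subgroup, then Λ contains the normal closure of L in G; in particular, if L is nontrivial then Λ = G. -/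
theorem stmt_14 {G : Type*} [Group G] [IsSimpleGroup G]
    (Λ L : Subgroup G) (hΛ : Commensurated Λ) (hLΛ : L ≤ Λ)
    (hL : ∀ K : Subgroup L, K.index ≠ 0 → K = ⊤) :
    Subgroup.normalClosure (L : Set G) ≤ Λ ∧ (L ≠ ⊥ → Λ = ⊤) := by
  have key : ∀ g : G, L ≤ conjS g Λ ⊓ Λ := by
    intro g
    have h1 : (conjS g Λ ⊓ Λ).relIndex L ≠ 0 := fun h =>
      hΛ g (Subgroup.relIndex_eq_zero_of_le_right hLΛ h)
    have h2 := hL ((conjS g Λ ⊓ Λ).subgroupOf L) h1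
    exact (Subgroup.subgroupOf_eq_top.mp h2)
  have hconj : ∀ g : G, ∀ x ∈ L, g * x * g⁻¹ ∈ Λ := by
    intro g x hx
    have := ((key g⁻¹).trans inf_le_left) hx
    obtain ⟨y, hy, hyx⟩ := this
    simp only [MulEquiv.coe_toMonoidHom, MulAut.conj_apply] at hyx
    have : g * x * g⁻¹ = y := by
      rw [← hyx]; group
    rw [this]; exact hy
  have hnc : Subgroup.normalClosure (L : Set G) ≤ Λ := by
    apply Subgroup.closure_le Λ |>.mpr
    rintro x hx
    obtain ⟨a, ha, hax⟩ := Group.mem_conjugatesOfSet_iff.mp hx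
    obtain ⟨c, hc⟩ := isConj_iff.mp hax
    rw [← hc]
    exact hconj c a ha
  refine ⟨hnc, fun hLbot => ?_⟩
  have hne : Subgroup.normalClosure (L : Set G) ≠ ⊥ := by
    intro h
    apply hLbot
    have : L ≤ Subgroup.normalClosure (L : Set G) := fun x hx =>
      Subgroup.subset_normalClosure hx
    exact le_bot_iff.mp (h ▸ this)
  have := IsSimpleGroup.eq_bot_or_eq_top_of_normal (Subgroup.normalClosure (L : Set G))
    Subgroup.normalClosure_normal
  rcases this with h | h
  · exact absurd h hne
  · exact top_le_iff.mp (h ▸ hnc)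
end
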